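/- Let 0 < θ < ε be reals and let ℓ1 < ℓ2 be positive integers. Then there exists a positive integer ℓ3 with the following property: for every probability space (Ω, Σ, μ) and every sequence A_1, …, A_{ℓ3} of measurable sets with μ(A_j) ≥ ε for all j, there exists a subset L of {1,…,ℓ3} of cardinality ℓ2 such that for every subset K of L of cardinality ℓ1 we have μ(⋂_{j∈K} A_j) ≥ θ^{ℓ1}. -/

import Mathlib

def RamseyW (r s t n : ℕ) : Prop :=
  ∀ V : Finset ℕ, n ≤ V.card → ∀ c : Finset ℕ → Bool, ∃ L, L ⊆ V ∧
    ((L.card = s ∧ ∀ K ⊆ L, K.card = r → c K = true) ∨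
     (L.card = t ∧ ∀ K ⊆ L, K.card = r → c K = false))

lemma ramseyW_swap {r s t n : ℕ} (h : RamseyW r s t n) : RamseyW r t s n := by
  intro V hV c
  obtain ⟨L, hLV, hL⟩ := h V hV (fun K => !c K)
  refine ⟨L, hLV, ?_⟩
  rcases hL with ⟨h1, h2⟩ | ⟨h1, h2⟩
  · exact Or.inr ⟨h1, fun K hK hKc => by simpa using h2 K hK hKc⟩
  · exact Or.inl ⟨h1, fun K hK hKc => by simpa using h2 K hK hKc⟩

lemma ramseyW_vac {r s t : ℕ} (h : s < r) : RamseyW r s t s := by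
  intro V hV c
  obtain ⟨L, hLV, hLc⟩ := Finset.exists_subset_card_eq hV
  refine ⟨L, hLV, Or.inl ⟨hLc, fun K hK hKc => ?_⟩⟩
  have := Finset.card_le_card hK
  omega

lemma ramseyW_zero (s t : ℕ) : RamseyW 0 s t (max s t) := by
  intro V hV c
  by_cases hc : c ∅ = true
  · obtain ⟨L, hLV, hLc⟩ := Finset.exists_subset_card_eq (le_trans (le_max_left s t) hV)
    exact ⟨L, hLV, Or.inl ⟨hLc, fun K _ hKc => by rwa [Finset.card_eq_zero.mp hKc]⟩⟩
  · obtain ⟨L, hLV, hLc⟩ := Finset.exists_subset_card_eq (le_trans (le_max_right s t) hV)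
    refine ⟨L, hLV, Or.inr ⟨hLc, fun K _ hKc => ?_⟩⟩
    rw [Finset.card_eq_zero.mp hKc]
    exact Bool.not_eq_true _ ▸ hc

theorem ramseyW_exists : ∀ r s t : ℕ, ∃ n, RamseyW r s t n := by
  intro r
  induction r with
  | zero => exact fun s t => ⟨max s t, ramseyW_zero s t⟩
  | succ r ihr =>
    suffices H : ∀ N s t, s + t ≤ N → ∃ n, RamseyW (r + 1) s t n by
      exact fun s t => H (s + t) s t le_rfl
    intro N
    induction N with
    | zero =>
      intro s t h
      have hs : s = 0 := by omega
      exact ⟨s, hs ▸ ramseyW_vac (by omega)⟩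
    | succ N ihN =>
      intro s t hst
      by_cases hs : s < r + 1
      · exact ⟨s, ramseyW_vac hs⟩
      by_cases ht : t < r + 1
      · exact ⟨t, ramseyW_swap (ramseyW_vac ht)⟩
      push_neg at hs ht
      obtain ⟨n₁, hn₁⟩ := ihN (s - 1) t (by omega)
      obtain ⟨n₂, hn₂⟩ := ihN s (t - 1) (by omega)
      obtain ⟨n', hn'⟩ := ihr n₁ n₂
      refine ⟨n' + 1, ?_⟩
      intro V hV c
      obtain ⟨v, hv⟩ : V.Nonempty := Finset.card_pos.mp (by omega)
      set V' := V.erase v with hV'def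
      have hV'card : n' ≤ V'.card := by
        rw [Finset.card_erase_of_mem hv]; omega
      obtain ⟨W, hWV', hW⟩ := hn' V' hV'card (fun K => c (insert v K))
      have hvW : v ∉ W := fun h => Finset.notMem_erase v V (hWV' h)
      have hWV : W ⊆ V := hWV'.trans (Finset.erase_subset v V)
      -- helper for the two symmetric cases
      rcases hW with ⟨hWcard, hWmono⟩ | ⟨hWcard, hWmono⟩
      · -- all (r)-subsets K of W have c (insert v K) = true
        obtain ⟨L, hLW, hL⟩ := hn₁ W (le_of_eq hWcard.symm) c
        rcases hL with ⟨hLcard, hLmono⟩ | ⟨hLcard, hLmono⟩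
        · refine ⟨insert v L, ?_, Or.inl ⟨?_, ?_⟩⟩
          · exact Finset.insert_subset hv (hLW.trans hWV)
          · rw [Finset.card_insert_of_notMem (fun h => hvW (hLW h)), hLcard]; omega
          · intro K hK hKc
            by_cases hvK : v ∈ K
            · have hKe : K.erase v ⊆ L := by
                intro x hx
                have := hK (Finset.mem_of_mem_erase hx)
                rcases Finset.mem_insert.mp this with h | h
                · exact absurd h (Finset.ne_of_mem_erase hx)
                · exact h
              have hcard : (K.erase v).card = r := by
                rw [Finset.card_erase_of_mem hvK, hKc]; omega
              have := hWmono (K.erase v) (hKe.trans hLW) hcard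
              rwa [Finset.insert_erase hvK] at this
            · have hKL : K ⊆ L := fun x hx => by
                rcases Finset.mem_insert.mp (hK hx) with h | h
                · exact absurd (h ▸ hx) hvK
                · exact h
              exact hLmono K hKL hKc
        · exact ⟨L, (hLW.trans hWV), Or.inr ⟨hLcard, hLmono⟩⟩
      · obtain ⟨L, hLW, hL⟩ := hn₂ W (le_of_eq hWcard.symm) c
        rcases hL with ⟨hLcard, hLmono⟩ | ⟨hLcard, hLmono⟩
        · exact ⟨L, (hLW.trans hWV), Or.inl ⟨hLcard, hLmono⟩⟩
        · refine ⟨insert v L, ?_, Or.inr ⟨?_, ?_⟩⟩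
          · exact Finset.insert_subset hv (hLW.trans hWV)
          · rw [Finset.card_insert_of_notMem (fun h => hvW (hLW h)), hLcard]; omega
          · intro K hK hKc
            by_cases hvK : v ∈ K
            · have hKe : K.erase v ⊆ L := by
                intro x hx
                have := hK (Finset.mem_of_mem_erase hx)
                rcases Finset.mem_insert.mp this with h | h
                · exact absurd h (Finset.ne_of_mem_erase hx)
                · exact h
              have hcard : (K.erase v).card = r := by
                rw [Finset.card_erase_of_mem hvK, hKc]; omega
              have := hWmono (K.erase v) (hKe.trans hLW) hcard
              rwa [Finset.insert_erase hvK] at this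
            · have hKL : K ⊆ L := fun x hx => by
                rcases Finset.mem_insert.mp (hK hx) with h | h
                · exact absurd (h ▸ hx) hvK
                · exact h
              exact hLmono K hKL hKc

open MeasureTheory

lemma counting {Ω : Type} [MeasurableSpace Ω] (μ : Measure Ω) [IsProbabilityMeasure μ]
    (ε θ : ℝ) (hθ : 0 < θ) (hθε : θ < ε) (k : ℕ) (hk : 0 < k)
    (M : Finset ℕ) (A : ℕ → Set Ω)
    (hmeas : ∀ i, MeasurableSet (A i))
    (hA : ∀ i ∈ M, ENNReal.ofReal ε ≤ μ (A i))
    (hm : (k : ℝ) < (ε - θ) * M.card) :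
    ∃ K ⊆ M, K.card = k ∧ ENNReal.ofReal (θ ^ k) ≤ μ (⋂ j ∈ K, A j) := by
  classical
  set m := M.card with hmdef
  have hεθ : 0 < ε - θ := by linarith
  have hm0 : 0 < m := by
    by_contra h
    push_neg at h
    have h0 : m = 0 := by omega
    rw [h0, Nat.cast_zero, mul_zero] at hm
    have : (0:ℝ) ≤ k := Nat.cast_nonneg k
    linarith
  have hε1 : ε ≤ 1 := by
    obtain ⟨i, hi⟩ := Finset.card_pos.mp hm0
    have h1 := (hA i hi).trans (prob_le_one (μ := μ) (s := A i))
    exact ENNReal.ofReal_le_one.mp h1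
  have hkm : k < m := by
    have h1 : (k : ℝ) < (m : ℝ) := by nlinarith [Nat.cast_nonneg (α := ℝ) m]
    exact_mod_cast h1
  -- atoms
  set cell : Finset ℕ → Set Ω := fun T => (⋂ j ∈ T, A j) ∩ (⋂ j ∈ M \ T, (A j)ᶜ) with hcelldef
  have hcellmeas : ∀ T, MeasurableSet (cell T) := fun T =>
    (Finset.measurableSet_biInter T fun j _ => hmeas j).inter
      (Finset.measurableSet_biInter _ fun j _ => (hmeas j).compl)
  have hmem_cell : ∀ (x : Ω) (T : Finset ℕ),
      x ∈ cell T ↔ (∀ j ∈ T, x ∈ A j) ∧ (∀ j ∈ M \ T, x ∉ A j) := by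
    intro x T
    simp [hcelldef, Set.mem_iInter]
  have hdisj_aux : ∀ T T' : Finset ℕ, T' ⊆ M → ∀ j, j ∈ T → j ∈ M → j ∉ T' →
      Disjoint (cell T) (cell T') := by
    intro T T' hT' j hjT hjM hjT'
    rw [Set.disjoint_left]
    intro x hx hx'
    exact ((hmem_cell x T').mp hx').2 j (Finset.mem_sdiff.mpr ⟨hjM, hjT'⟩)
      (((hmem_cell x T).mp hx).1 j hjT)
  have hdisj : Set.PairwiseDisjoint (↑M.powerset : Set (Finset ℕ)) cell := by
    intro T hT T' hT' hne
    rw [Finset.mem_coe, Finset.mem_powerset] at hT hT'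
    by_cases h : ∃ j ∈ T, j ∉ T'
    · obtain ⟨j, h1, h2⟩ := h
      exact hdisj_aux T T' hT' j h1 (hT h1) h2
    · push_neg at h
      obtain ⟨j, h1, h2⟩ : ∃ j ∈ T', j ∉ T := by
        by_contra h'
        push_neg at h'
        exact hne (Finset.Subset.antisymm h h')
      exact (hdisj_aux T' T hT j h1 (hT' h1) h2).symm
  have hcover : ⋃ T ∈ M.powerset, cell T = Set.univ := by
    rw [Set.eq_univ_iff_forall]
    intro x
    rw [Set.mem_iUnion₂]
    refine ⟨M.filter (fun j => x ∈ A j), Finset.mem_powerset.mpr (Finset.filter_subset _ _), ?_⟩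
    rw [hmem_cell]
    exact ⟨fun j hj => (Finset.mem_filter.mp hj).2,
      fun j hj hxj => (Finset.mem_sdiff.mp hj).2
        (Finset.mem_filter.mpr ⟨(Finset.mem_sdiff.mp hj).1, hxj⟩)⟩
  have hsum1 : ∑ T ∈ M.powerset, μ (cell T) = 1 := by
    rw [← measure_biUnion_finset hdisj (fun T _ => hcellmeas T), hcover, measure_univ]
  set p : Finset ℕ → ℝ := fun T => (μ (cell T)).toReal with hpdef
  have hpnn : ∀ T, 0 ≤ p T := fun T => ENNReal.toReal_nonneg
  have hptot : ∑ T ∈ M.powerset, p T = 1 := by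
    rw [hpdef, ← ENNReal.toReal_sum (fun T _ => measure_ne_top μ _), hsum1, ENNReal.toReal_one]
  -- degree bound
  have hdeg : ε * m ≤ ∑ T ∈ M.powerset, (T.card : ℝ) * p T := by
    have hjlb : ∀ j ∈ M, ε ≤ ∑ T ∈ M.powerset.filter (fun T => j ∈ T), p T := by
      intro j hj
      have hsub : A j ⊆ ⋃ T ∈ M.powerset.filter (fun T => j ∈ T), cell T := by
        intro x hx
        rw [Set.mem_iUnion₂]
        refine ⟨M.filter (fun i => x ∈ A i), ?_, ?_⟩
        · rw [Finset.mem_filter]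
          exact ⟨Finset.mem_powerset.mpr (Finset.filter_subset _ _),
            Finset.mem_filter.mpr ⟨hj, hx⟩⟩
        · rw [hmem_cell]
          exact ⟨fun i hi => (Finset.mem_filter.mp hi).2,
            fun i hi hxi => (Finset.mem_sdiff.mp hi).2
              (Finset.mem_filter.mpr ⟨(Finset.mem_sdiff.mp hi).1, hxi⟩)⟩
      have h1 : ENNReal.ofReal ε ≤ ∑ T ∈ M.powerset.filter (fun T => j ∈ T), μ (cell T) :=
        (hA j hj).trans ((measure_mono hsub).trans (measure_biUnion_finset_le _ _))
      have hfin : (∑ T ∈ M.powerset.filter (fun T => j ∈ T), μ (cell T)) ≠ ⊤ :=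
        (ENNReal.sum_lt_top.mpr fun T _ => measure_lt_top μ _).ne
      have h2 := ENNReal.toReal_mono hfin h1
      rw [ENNReal.toReal_ofReal (by linarith), ENNReal.toReal_sum
        (fun T _ => measure_ne_top μ _)] at h2
      exact h2
    calc ε * m = ∑ _j ∈ M, ε := by rw [Finset.sum_const, nsmul_eq_mul]; ring
      _ ≤ ∑ j ∈ M, ∑ T ∈ M.powerset.filter (fun T => j ∈ T), p T := Finset.sum_le_sum hjlb
      _ = ∑ j ∈ M, ∑ T ∈ M.powerset, if j ∈ T then p T else 0 := by
          exact Finset.sum_congr rfl fun j _ => (Finset.sum_filter _ _)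
      _ = ∑ T ∈ M.powerset, ∑ j ∈ M, if j ∈ T then p T else 0 := Finset.sum_comm
      _ = ∑ T ∈ M.powerset, (T.card : ℝ) * p T := by
          refine Finset.sum_congr rfl fun T hT => ?_
          rw [Finset.mem_powerset] at hT
          rw [← Finset.sum_filter, Finset.filter_mem_eq_inter,
            Finset.inter_eq_right.mpr hT, Finset.sum_const, nsmul_eq_mul]
  -- counting identity
  have hcount : ∑ K ∈ M.powersetCard k, ∑ T ∈ M.powerset.filter (fun T => K ⊆ T), p T
      = ∑ T ∈ M.powerset, ((T.card).choose k : ℝ) * p T := by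
    calc ∑ K ∈ M.powersetCard k, ∑ T ∈ M.powerset.filter (fun T => K ⊆ T), p T
        = ∑ K ∈ M.powersetCard k, ∑ T ∈ M.powerset, if K ⊆ T then p T else 0 := by
          exact Finset.sum_congr rfl fun K _ => (Finset.sum_filter _ _)
      _ = ∑ T ∈ M.powerset, ∑ K ∈ M.powersetCard k, if K ⊆ T then p T else 0 := Finset.sum_comm
      _ = ∑ T ∈ M.powerset, ((T.card).choose k : ℝ) * p T := by
          refine Finset.sum_congr rfl fun T hT => ?_
          rw [Finset.mem_powerset] at hT
          rw [← Finset.sum_filter]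
          have heq : (M.powersetCard k).filter (fun K => K ⊆ T) = T.powersetCard k := by
            ext K
            simp only [Finset.mem_filter, Finset.mem_powersetCard]
            exact ⟨fun ⟨⟨_, h2⟩, h3⟩ => ⟨h3, h2⟩, fun ⟨h1, h2⟩ => ⟨⟨h1.trans hT, h2⟩, h1⟩⟩
          rw [heq, Finset.sum_const, Finset.card_powersetCard, nsmul_eq_mul]
  -- intersection lower bound
  have hKbound : ∀ K ∈ M.powersetCard k,
      ∑ T ∈ M.powerset.filter (fun T => K ⊆ T), p T ≤ (μ (⋂ j ∈ K, A j)).toReal := by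
    intro K hK
    have h1 : ∑ T ∈ M.powerset.filter (fun T => K ⊆ T), μ (cell T) ≤ μ (⋂ j ∈ K, A j) := by
      rw [← measure_biUnion_finset
        (hdisj.subset (Finset.coe_subset.mpr (Finset.filter_subset _ _)))
        (fun T _ => hcellmeas T)]
      refine measure_mono (Set.iUnion₂_subset fun T hT => ?_)
      rw [Finset.mem_filter] at hT
      intro x hx
      rw [Set.mem_iInter₂]
      exact fun j hj => ((hmem_cell x T).mp hx).1 j (hT.2 hj)
    have h2 := ENNReal.toReal_mono (measure_ne_top μ _) h1
    rwa [ENNReal.toReal_sum (fun T _ => measure_ne_top μ _)] at h2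
  -- Jensen
  set c0 : ℝ := (k : ℝ) - 1 with hc0def
  set f : ℝ → ℝ := fun x => ((x - c0) ⊔ 0) ^ k with hfdef
  have hbase : ConvexOn ℝ Set.univ (fun x : ℝ => (x - c0) ⊔ 0) := by
    refine ConvexOn.sup ⟨convex_univ, ?_⟩ (convexOn_const 0 convex_univ)
    intro x _ y _ a b ha hb hab
    simp only [smul_eq_mul]
    exact le_of_eq (by linear_combination c0 * hab)
  have hconv : ConvexOn ℝ Set.univ f := by
    have := hbase.pow (fun x _ => le_sup_right) k
    convert this using 1
    all_goals rfl
  have hfmono : Monotone f := fun a b hab =>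
    pow_le_pow_left₀ le_sup_right (sup_le_sup_right (by linarith) 0) k
  have hjensen := hconv.map_sum_le (t := M.powerset) (p := fun T => (T.card : ℝ))
    (fun T _ => hpnn T) hptot (fun _ _ => Set.mem_univ _)
  simp only [smul_eq_mul] at hjensen
  -- f at ε * m
  have hfd : ∀ d : ℕ, f d ≤ (d.descFactorial k : ℝ) := by
    intro d
    have h1 : ((d : ℝ) - c0) ⊔ 0 ≤ ((d + 1 - k : ℕ) : ℝ) := by
      refine sup_le ?_ (Nat.cast_nonneg _)
      rcases le_or_gt k (d + 1) with h | h
      · rw [Nat.cast_sub h]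
        push_cast
        rw [hc0def]
        linarith
      · have h0 : d + 1 - k = 0 := by omega
        rw [h0, Nat.cast_zero, hc0def]
        have : (d : ℝ) + 1 < (k : ℝ) := by exact_mod_cast h
        linarith
    calc f d ≤ (((d + 1 - k : ℕ) : ℝ)) ^ k := pow_le_pow_left₀ le_sup_right h1 k
      _ = (((d + 1 - k) ^ k : ℕ) : ℝ) := by push_cast; ring
      _ ≤ _ := Nat.cast_le.mpr (Nat.pow_sub_le_descFactorial d k)
  have hθm : 0 < θ * m := by positivity
  have hfεm : (θ * m) ^ k < f (ε * m) := by
    have h1 : θ * m < ε * m - c0 := by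
      rw [hc0def]
      have : (k : ℝ) < ε * m - θ * m := by nlinarith
      linarith
    have h2 : (ε * (m : ℝ) - c0) ⊔ 0 = ε * m - c0 := sup_eq_left.mpr (by linarith)
    rw [hfdef]
    simp only
    rw [h2]
    exact pow_lt_pow_left₀ h1 hθm.le (by omega)
  -- main chain
  have hchain : (θ * m) ^ k < ∑ T ∈ M.powerset, (((T.card).descFactorial k : ℝ)) * p T := by
    have h3 : f (ε * m) ≤ f (∑ T ∈ M.powerset, (T.card : ℝ) * p T) := hfmono hdeg
    have h4 : f (∑ T ∈ M.powerset, (T.card : ℝ) * p T) ≤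
        ∑ T ∈ M.powerset, p T * f (T.card) := by
      have : ∑ T ∈ M.powerset, (T.card : ℝ) * p T = ∑ T ∈ M.powerset, p T * (T.card : ℝ) := by
        exact Finset.sum_congr rfl fun T _ => mul_comm _ _
      rw [this]
      exact hjensen
    have h5 : ∑ T ∈ M.powerset, p T * f (T.card) ≤
        ∑ T ∈ M.powerset, (((T.card).descFactorial k : ℝ)) * p T := by
      refine Finset.sum_le_sum fun T _ => ?_
      rw [mul_comm]
      exact mul_le_mul_of_nonneg_right (hfd T.card) (hpnn T)
    linarith [hfεm]
  have hdesc : ∀ d : ℕ, ((d.descFactorial k : ℝ)) = (k.factorial : ℝ) * (d.choose k : ℝ) := by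
    intro d
    exact_mod_cast congrArg Nat.cast (Nat.descFactorial_eq_factorial_mul_choose d k)
  have hkfac : (0 : ℝ) < (k.factorial : ℝ) := by exact_mod_cast k.factorial_pos
  have h6 : (k.factorial : ℝ) * ((θ ^ k) * (m.choose k : ℝ)) ≤ (θ * m) ^ k := by
    have heq : (k.factorial : ℝ) * ((θ ^ k) * (m.choose k : ℝ))
        = θ ^ k * ((m.descFactorial k : ℝ)) := by rw [hdesc]; ring
    rw [heq, mul_pow]
    refine mul_le_mul_of_nonneg_left ?_ (by positivity)
    exact_mod_cast Nat.descFactorial_le_pow m k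
  have h7 : ∑ T ∈ M.powerset, (((T.card).descFactorial k : ℝ)) * p T
      = (k.factorial : ℝ) *
        ∑ K ∈ M.powersetCard k, ∑ T ∈ M.powerset.filter (fun T => K ⊆ T), p T := by
    rw [hcount, Finset.mul_sum]
    exact Finset.sum_congr rfl fun T _ => by rw [hdesc]; ring
  have h9 : (k.factorial : ℝ) * ((θ ^ k) * (m.choose k : ℝ))
      < (k.factorial : ℝ) * ∑ K ∈ M.powersetCard k, (μ (⋂ j ∈ K, A j)).toReal := by
    calc (k.factorial : ℝ) * ((θ ^ k) * (m.choose k : ℝ)) ≤ (θ * m) ^ k := h6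
      _ < ∑ T ∈ M.powerset, (((T.card).descFactorial k : ℝ)) * p T := hchain
      _ = (k.factorial : ℝ) *
          ∑ K ∈ M.powersetCard k, ∑ T ∈ M.powerset.filter (fun T => K ⊆ T), p T := h7
      _ ≤ (k.factorial : ℝ) * ∑ K ∈ M.powersetCard k, (μ (⋂ j ∈ K, A j)).toReal :=
          mul_le_mul_of_nonneg_left (Finset.sum_le_sum hKbound) hkfac.le
  have hfinal : (θ ^ k) * (m.choose k : ℝ)
      < ∑ K ∈ M.powersetCard k, (μ (⋂ j ∈ K, A j)).toReal :=
    lt_of_mul_lt_mul_left h9 hkfac.le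
  by_contra hcon
  push_neg at hcon
  have hall : ∀ K ∈ M.powersetCard k, (μ (⋂ j ∈ K, A j)).toReal < θ ^ k := by
    intro K hK
    rw [Finset.mem_powersetCard] at hK
    have h1 : μ (⋂ j ∈ K, A j) < ENNReal.ofReal (θ ^ k) := hcon K hK.1 hK.2
    have h2 := ENNReal.toReal_lt_toReal (measure_ne_top μ _) ENNReal.ofReal_ne_top |>.mpr h1
    rwa [ENNReal.toReal_ofReal (by positivity)] at h2
  have hlt : ∑ K ∈ M.powersetCard k, (μ (⋂ j ∈ K, A j)).toReal
      < ∑ _K ∈ M.powersetCard k, θ ^ k :=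
    Finset.sum_lt_sum_of_nonempty (Finset.powersetCard_nonempty.mpr hkm.le) hall
  rw [Finset.sum_const, Finset.card_powersetCard, nsmul_eq_mul] at hlt
  linarith [hfinal, hlt]

theorem stmt_10 (ε θ : ℝ) (hθ : 0 < θ) (hθε : θ < ε)
    (ℓ1 ℓ2 : ℕ) (hℓ1 : 0 < ℓ1) (hℓ : ℓ1 < ℓ2) :
    ∃ ℓ3 : ℕ, 0 < ℓ3 ∧
      ∀ (Ω : Type) [MeasurableSpace Ω] (μ : Measure Ω) [IsProbabilityMeasure μ]
        (A : Fin ℓ3 → Set Ω),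
        (∀ j, MeasurableSet (A j)) →
        (∀ j, ENNReal.ofReal ε ≤ μ (A j)) →
        ∃ L : Finset (Fin ℓ3), L.card = ℓ2 ∧
          ∀ K ⊆ L, K.card = ℓ1 →
            ENNReal.ofReal (θ ^ ℓ1) ≤ μ (⋂ j ∈ K, A j) := by
  classical
  have hεθ : 0 < ε - θ := by linarith
  obtain ⟨m0, hm0⟩ := exists_nat_gt ((ℓ1 : ℝ) / (ε - θ))
  set m := max ℓ2 (m0 + 1) with hmdef
  have hmbig : (ℓ1 : ℝ) < (ε - θ) * m := by
    have h1 : (ℓ1 : ℝ) / (ε - θ) < m := by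
      refine lt_of_lt_of_le hm0 ?_
      exact_mod_cast le_trans (Nat.le_succ m0) (le_max_right ℓ2 (m0 + 1))
    calc (ℓ1 : ℝ) = ((ℓ1 : ℝ) / (ε - θ)) * (ε - θ) := by field_simp
      _ < m * (ε - θ) := mul_lt_mul_of_pos_right h1 hεθ
      _ = (ε - θ) * m := mul_comm _ _
  obtain ⟨n, hn⟩ := ramseyW_exists ℓ1 ℓ2 m
  refine ⟨n + 1, Nat.succ_pos n, ?_⟩
  intro Ω _ μ _ A hAmeas hAε
  set A' : ℕ → Set Ω := fun i => if h : i < n + 1 then A ⟨i, h⟩ else Set.univ with hA'def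
  have hA'apply : ∀ (i : ℕ) (h : i < n + 1), A' i = A ⟨i, h⟩ := fun i h => by
    simp only [hA'def, dif_pos h]
  have hA'meas : ∀ i, MeasurableSet (A' i) := by
    intro i
    by_cases h : i < n + 1
    · rw [hA'apply i h]; exact hAmeas _
    · have : A' i = Set.univ := by simp only [hA'def, dif_neg h]
      rw [this]; exact MeasurableSet.univ
  set c : Finset ℕ → Bool :=
    fun K => decide (ENNReal.ofReal (θ ^ ℓ1) ≤ μ (⋂ j ∈ K, A' j)) with hcdef
  obtain ⟨L0, hL0V, hL0⟩ := hn (Finset.range (n + 1)) (by rw [Finset.card_range]; exact Nat.le_succ n) c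
  have hL0lt : ∀ i ∈ L0, i < n + 1 := fun i hi => Finset.mem_range.mp (hL0V hi)
  rcases hL0 with ⟨hcard, hmono⟩ | ⟨hcard, hmono⟩
  · refine ⟨L0.attachFin hL0lt, by rw [Finset.card_attachFin, hcard], ?_⟩
    intro K hK hKcard
    set K0 := K.image (Fin.val) with hK0def
    have hK0sub : K0 ⊆ L0 := by
      intro i hi
      obtain ⟨j, hj, rfl⟩ := Finset.mem_image.mp hi
      have := hK hj
      rwa [Finset.mem_attachFin] at this
    have hK0card : K0.card = ℓ1 := by
      rw [hK0def, Finset.card_image_of_injective _ Fin.val_injective, hKcard]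
    have hc := hmono K0 hK0sub hK0card
    rw [hcdef] at hc
    have hc' : ENNReal.ofReal (θ ^ ℓ1) ≤ μ (⋂ j ∈ K0, A' j) := of_decide_eq_true hc
    have hiInter : (⋂ j ∈ K0, A' j) = ⋂ j ∈ K, A j := by
      rw [hK0def]
      ext x
      simp only [Set.mem_iInter, Finset.mem_image, forall_exists_index, and_imp]
      constructor
      · intro h j hj
        have h2 := h j.val j hj rfl
        rwa [hA'apply j.val j.isLt, Fin.eta] at h2
      · intro h i j hj hji
        subst hji
        rw [hA'apply j.val j.isLt, Fin.eta]
        exact h j hj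
    rwa [hiInter] at hc'
  · exfalso
    have hA'ε : ∀ i ∈ L0, ENNReal.ofReal ε ≤ μ (A' i) := by
      intro i hi
      rw [hA'apply i (hL0lt i hi)]
      exact hAε _
    have hmcard : (ℓ1 : ℝ) < (ε - θ) * L0.card := by rw [hcard]; exact hmbig
    obtain ⟨K, hKsub, hKcard, hKge⟩ :=
      counting μ ε θ hθ hθε ℓ1 hℓ1 L0 A' hA'meas hA'ε hmcard
    have hb := hmono K hKsub hKcard
    rw [hcdef] at hb
    exact (of_decide_eq_false hb) hKge
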